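/- Squared volume formula for constant metric: let G = Hᵀ·H with H an invertible n×n real matrix, and let x₀,...,x_n be points of ℝⁿ with Y the n×n matrix of columns x_i − x₀. Then (1/n!²)·det(Yᵀ·G·Y) = −(−2)^{-n}·(1/n!²)·det(C_G), where C_G is the Cayley–Menger matrix built from the G-squared-distances (x_i−x_j)ᵀ·G·(x_i−x_j). -/

import Mathlib

open Matrix

/-- The Cayley–Menger matrix of a squared-distance function `g`. -/
def cayleyMenger {R : Type*} [CommRing R] {k : ℕ} (g : Fin (k+1) → Fin (k+1) → R) :
    Matrix (Option (Fin (k+1))) (Option (Fin (k+1))) R :=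
  fun i j =>
    match i, j with
    | none, none => 0
    | none, some _ => 1
    | some _, none => 1
    | some i, some j => g i j

def optEquiv (n : ℕ) : Fin 2 ⊕ Fin n ≃ Option (Fin (n+1)) where
  toFun := fun s => match s with
    | .inl ⟨0, _⟩ => none
    | .inl ⟨1, _⟩ => some 0
    | .inr k => some k.succ
  invFun := fun o => match o with
    | none => .inl 0
    | some j => Fin.cases (.inl 1) (fun k => .inr k) j
  left_inv := by
    rintro (a | k)
    · fin_cases a <;> simp
    · simp
  right_inv := by
    rintro (_ | j)
    · rfl
    · induction j using Fin.cases <;> simp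

theorem squared_volume_constant_metric {n : ℕ}
    (G H : Matrix (Fin n) (Fin n) ℝ) (hG : G = Hᵀ * H) (hH : IsUnit H.det)
    (x : Fin (n+1) → (Fin n → ℝ))
    (Y : Matrix (Fin n) (Fin n) ℝ) (hY : Y = Matrix.of fun r i => (x i.succ - x 0) r) :
    (1 / (Nat.factorial n : ℝ)^2) * (Yᵀ * G * Y).det =
      -((-2 : ℝ)^n)⁻¹ * (1 / (Nat.factorial n : ℝ)^2) *
        (cayleyMenger (fun i j =>
          dotProduct (x i - x j) (G.mulVec (x i - x j)))).det := by
  have hGsymm : ∀ a b, G a b = G b a := by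
    intro a b
    rw [hG]
    simp only [Matrix.mul_apply, Matrix.transpose_apply]
    exact Finset.sum_congr rfl fun k _ => mul_comm _ _
  have hsym : ∀ u v : Fin n → ℝ, u ⬝ᵥ G.mulVec v = v ⬝ᵥ G.mulVec u := by
    intro u v
    simp only [dotProduct, mulVec, Finset.mul_sum]
    rw [Finset.sum_comm]
    exact Finset.sum_congr rfl fun a _ => Finset.sum_congr rfl fun b _ => by
      rw [hGsymm b a]; ring
  have hbil : ∀ u v : Fin n → ℝ, (u - v) ⬝ᵥ G.mulVec (u - v)
      = u ⬝ᵥ G.mulVec u - 2 * (u ⬝ᵥ G.mulVec v) + v ⬝ᵥ G.mulVec v := by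
    intro u v
    rw [Matrix.mulVec_sub, dotProduct_sub, sub_dotProduct, sub_dotProduct, hsym v u]
    ring
  set d : Fin (n+1) → Fin (n+1) → ℝ :=
    fun i j => (x i - x j) ⬝ᵥ G.mulVec (x i - x j) with hd
  have hquad : ∀ a b : Fin (n+1),
      d a b = d a 0 + d 0 b - 2 * ((x a - x 0) ⬝ᵥ G.mulVec (x b - x 0)) := by
    intro a b
    have h1 : x a - x b = (x a - x 0) - (x b - x 0) := by abel
    have h2 : x 0 - x b = -(x b - x 0) := by abel
    have e1 : d a b = (x a - x 0) ⬝ᵥ G *ᵥ (x a - x 0)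
        - 2 * ((x a - x 0) ⬝ᵥ G *ᵥ (x b - x 0)) + (x b - x 0) ⬝ᵥ G *ᵥ (x b - x 0) := by
      rw [hd]; dsimp only; rw [h1, hbil]
    have e2 : d 0 b = (x b - x 0) ⬝ᵥ G *ᵥ (x b - x 0) := by
      rw [hd]; dsimp only
      rw [h2, Matrix.mulVec_neg, neg_dotProduct, dotProduct_neg, neg_neg]
    have e3 : d a 0 = (x a - x 0) ⬝ᵥ G *ᵥ (x a - x 0) := rfl
    rw [e1, e2, e3]; ring
  -- block matrices
  set A : Matrix (Fin 2) (Fin 2) ℝ := !![0, 1; 1, 0] with hA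
  set B : Matrix (Fin 2) (Fin n) ℝ :=
    Matrix.of (fun i j => if i = 0 then (1:ℝ) else d 0 j.succ) with hB
  set Bt : Matrix (Fin n) (Fin 2) ℝ :=
    Matrix.of (fun i j => if j = 0 then (1:ℝ) else d i.succ 0) with hBt
  set D : Matrix (Fin n) (Fin n) ℝ := Matrix.of (fun i j => d i.succ j.succ) with hD
  have hsub : (cayleyMenger d).submatrix (optEquiv n) (optEquiv n)
      = fromBlocks A B Bt D := by
    ext a b
    rcases a with a | i <;> rcases b with b | j
    · fin_cases a <;> fin_cases b <;>
        simp [cayleyMenger, optEquiv, fromBlocks, hA, hd]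
    · fin_cases a <;> simp [cayleyMenger, optEquiv, fromBlocks, hB]
    · fin_cases b <;> simp [cayleyMenger, optEquiv, fromBlocks, hBt]
    · simp [cayleyMenger, optEquiv, fromBlocks, hD]
  have hAinv : Invertible A := A.invertibleOfIsUnitDet (by
    simp [hA, Matrix.det_fin_two_of])
  have hAinveq : A⁻¹ = A := by
    apply Matrix.inv_eq_right_inv
    ext i j
    fin_cases i <;> fin_cases j <;>
      simp [hA, Matrix.mul_apply, Fin.sum_univ_two]
  have hSchur : (cayleyMenger d).det = A.det * (D - Bt * A⁻¹ * B).det := by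
    rw [← Matrix.det_submatrix_equiv_self (optEquiv n), hsub, Matrix.det_fromBlocks₁₁,
      Matrix.invOf_eq_nonsing_inv]
  have hblock : D - Bt * A⁻¹ * B = (-2 : ℝ) • (Yᵀ * G * Y) := by
    ext i j
    have hBtAB : (Bt * A⁻¹ * B) i j = d 0 j.succ + d i.succ 0 := by
      rw [hAinveq]
      simp [Matrix.mul_apply, Fin.sum_univ_two, hA, hB, hBt]
      ring
    have hW : (Yᵀ * G * Y) i j = (x i.succ - x 0) ⬝ᵥ G *ᵥ (x j.succ - x 0) := by
      rw [Matrix.mul_assoc]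
      simp only [Matrix.mul_apply, Matrix.transpose_apply, dotProduct, mulVec, hY,
        Matrix.of_apply, Pi.sub_apply]
    simp only [Matrix.sub_apply, Matrix.smul_apply, smul_eq_mul, hBtAB, hW, hD,
      Matrix.of_apply]
    rw [hquad i.succ j.succ]
    ring
  have hdet : (cayleyMenger d).det = -(-2:ℝ)^n * (Yᵀ * G * Y).det := by
    rw [hSchur, hblock, Matrix.det_smul]
    simp [hA, Matrix.det_fin_two_of, Fintype.card_fin]
  have hcm : (cayleyMenger fun i j =>
      dotProduct (x i - x j) (G.mulVec (x i - x j))) = cayleyMenger d := rfl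
  rw [hcm, hdet]
  have h2 : ((-2:ℝ)^n) ≠ 0 := pow_ne_zero _ (by norm_num)
  field_simp
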